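/- Let n ≥ 1, λ > 0, ω ∈ ℝ^n, T ∈ ℝ, and ρ, σ, K > 0. Let Λ = {s ∈ ℂ : Re s ≤ T, |Im s| ≤ ρ} and let v : Λ × T^n_σ → ℂ be continuous, holomorphic in the interior, 2π-periodic in each component of φ, and satisfy |v(s,φ)| ≤ K e^{Re s} on Λ × T^n_σ. Then the integral u(s,φ) = ∫_{−∞}^0 v(s + λt, φ + ωt) dt converges absolutely for every (s,φ) ∈ Λ × T^n_σ, defines a function holomorphic in the interior of Λ × T^n_σ which satisfies λ ∂u/∂s + D_ω u = v there, and |u(s,φ)| ≤ λ^{−1} K e^{Re s} on Λ × T^n_σ. -/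

import Mathlib

open Complex MeasureTheory Set Metric
open scoped BigOperators

noncomputable section

/-- The complex strip `T^n_σ = {z ∈ ℂ^n : |Im z_j| ≤ σ}`. -/
def TStrip (n : ℕ) (σ : ℝ) : Set (Fin n → ℂ) := {z | ∀ j, |(z j).im| ≤ σ}

/-- The semi-infinite strip `Λ = {s ∈ ℂ : Re s ≤ T, |Im s| ≤ ρ}`. -/
def SemiStrip (T ρ : ℝ) : Set ℂ := {s | s.re ≤ T ∧ |s.im| ≤ ρ}

section Aux

/-- Cauchy-type bound on the derivative via the Schwarz lemma. -/
lemma cauchy_fderiv_bound {E : Type*} [NormedAddCommGroup E] [NormedSpace ℂ E]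
    (f : E → ℂ) {q : E} {r M : ℝ} (hr : 0 < r) (hM : 0 < M)
    (hd : ∀ x ∈ ball q r, DifferentiableAt ℂ f x)
    (hb : ∀ x ∈ ball q r, ‖f x‖ ≤ M) : ‖fderiv ℂ f q‖ ≤ 3 * M / r := by
  refine ContinuousLinearMap.opNorm_le_bound _ (by positivity) fun w => ?_
  rcases eq_or_ne w 0 with rfl | hw
  · simp
  have hw' : 0 < ‖w‖ := norm_pos_iff.2 hw
  set g : ℂ → ℂ := fun z => f (q + z • w) with hg
  have hmem : ∀ z ∈ ball (0 : ℂ) (r / ‖w‖), q + z • w ∈ ball q r := by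
    intro z hz
    rw [mem_ball] at hz ⊢
    rw [dist_eq_norm]
    simp only [add_sub_cancel_left, norm_smul]
    calc ‖z‖ * ‖w‖ = dist z 0 * ‖w‖ := by rw [dist_zero_right]
    _ < r / ‖w‖ * ‖w‖ := by gcongr
    _ = r := div_mul_cancel₀ _ hw'.ne'
  have hgd : DifferentiableOn ℂ g (ball (0 : ℂ) (r / ‖w‖)) := by
    intro z hz
    have h1 : DifferentiableAt ℂ (fun z : ℂ => q + z • w) z :=
      (differentiableAt_id.smul_const w).const_add q
    exact ((hd _ (hmem z hz)).comp z h1).differentiableWithinAt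
  have hmaps : MapsTo g (ball (0 : ℂ) (r / ‖w‖)) (ball (g 0) (3 * M)) := by
    intro z hz
    rw [mem_ball, dist_eq_norm]
    calc ‖g z - g 0‖ ≤ ‖g z‖ + ‖g 0‖ := norm_sub_le _ _
    _ ≤ M + M := add_le_add (hb _ (hmem z hz)) (hb _ (hmem 0 (mem_ball_self (div_pos hr hw'))))
    _ < 3 * M := by linarith
  have h₀ : 0 < r / ‖w‖ := div_pos hr hw'
  have hschwarz := Complex.norm_deriv_le_div_of_mapsTo_ball hgd (hmaps.mono_right ball_subset_closedBall) h₀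
  have hder : HasDerivAt g (fderiv ℂ f q w) 0 := by
    have h1 : HasDerivAt (fun z : ℂ => q + z • w) w 0 := by
      simpa using ((hasDerivAt_id (0 : ℂ)).smul_const w).const_add q
    have h2 : HasFDerivAt f (fderiv ℂ f q) (q + (0 : ℂ) • w) := by
      simpa using (hd q (mem_ball_self hr)).hasFDerivAt
    exact h2.comp_hasDerivAt 0 h1
  calc ‖fderiv ℂ f q w‖ = ‖deriv g 0‖ := by rw [hder.deriv]
  _ ≤ 3 * M / (r / ‖w‖) := hschwarz
  _ = 3 * M / r * ‖w‖ := by field_simp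

/-- The basic exponential integral on `Iic 0`. -/
lemma exp_integrableOn_Iic {lam : ℝ} (hlam : 0 < lam) :
    IntegrableOn (fun t : ℝ => Real.exp (lam * t)) (Set.Iic (0 : ℝ)) := by
  have h_map_neg : (volume.restrict (Ici (0:ℝ))).map Neg.neg = volume.restrict (Iic (0:ℝ)) := by
    conv => rhs; rw [← Measure.map_neg_eq_self (volume : Measure ℝ),
      measurableEmbedding_neg.restrict_map]
    simp
  rw [IntegrableOn, ← h_map_neg, measurableEmbedding_neg.integrable_map_iff]
  have heq : ((fun t : ℝ => Real.exp (lam * t)) ∘ Neg.neg) = fun t : ℝ => Real.exp (-lam * t) := by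
    ext t; simp [Function.comp]
  rw [heq, ← IntegrableOn, integrableOn_Ici_iff_integrableOn_Ioi]
  exact exp_neg_integrableOn_Ioi 0 hlam

lemma exp_integral_Iic {lam : ℝ} (hlam : 0 < lam) :
    ∫ t in Set.Iic (0 : ℝ), Real.exp (lam * t) = lam⁻¹ := by
  have h1 : (∫ t in Set.Iic (0 : ℝ), Real.exp (lam * t))
      = ∫ x in Set.Ioi (0 : ℝ), Real.exp (-(lam * x)) := by
    have := integral_comp_neg_Ioi 0 (fun t => Real.exp (lam * t))
    norm_num at this
    exact this.symm
  rw [h1]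
  have h3 := integral_comp_mul_left_Ioi (fun y => Real.exp (-y)) 0 hlam
  simp only [mul_zero] at h3
  rw [h3, integral_exp_neg_Ioi_zero, smul_eq_mul, mul_one]


variable {n : ℕ} {lam : ℝ} {ω : Fin n → ℝ} {T ρ σ K : ℝ}

lemma shift_mem_strip (hlam : 0 < lam) {p : ℂ × (Fin n → ℂ)}
    (hp : p ∈ SemiStrip T ρ ×ˢ TStrip n σ) {t : ℝ} (ht : t ≤ 0) :
    p + (((lam * t : ℝ) : ℂ), fun j => ((t * ω j : ℝ) : ℂ)) ∈ SemiStrip T ρ ×ˢ TStrip n σ := by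
  rw [Set.mem_prod] at hp ⊢
  obtain ⟨⟨h1, h2⟩, h3⟩ := hp
  refine ⟨⟨?_, ?_⟩, fun j => ?_⟩
  · show (p.1 + ((lam * t : ℝ) : ℂ)).re ≤ T
    simp only [Complex.add_re, Complex.ofReal_re]
    nlinarith [mul_nonpos_of_nonneg_of_nonpos hlam.le ht]
  · show |(p.1 + ((lam * t : ℝ) : ℂ)).im| ≤ ρ
    simpa using h2
  · show |((p.2 j) + ((t * ω j : ℝ) : ℂ)).im| ≤ σ
    simpa using h3 j

lemma shift_closedBall_subset (hlam : 0 < lam) {p : ℂ × (Fin n → ℂ)} {r : ℝ}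
    (hball : Metric.closedBall p r ⊆ SemiStrip T ρ ×ˢ TStrip n σ) {t : ℝ} (ht : t ≤ 0) :
    Metric.closedBall (p + (((lam * t : ℝ) : ℂ), fun j => ((t * ω j : ℝ) : ℂ))) r
      ⊆ SemiStrip T ρ ×ˢ TStrip n σ := by
  intro x hx
  set c : ℂ × (Fin n → ℂ) := (((lam * t : ℝ) : ℂ), fun j => ((t * ω j : ℝ) : ℂ)) with hc
  have hx' : x - c ∈ Metric.closedBall p r := by
    rw [Metric.mem_closedBall] at hx ⊢
    rw [dist_eq_norm] at hx ⊢
    convert hx using 2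
    abel
  have := shift_mem_strip (ω := ω) hlam (hball hx') ht
  rw [← hc] at this
  simpa using this

lemma shift_continuous (p : ℂ × (Fin n → ℂ)) :
    Continuous (fun t : ℝ => p + (((lam * t : ℝ) : ℂ), fun j => ((t * ω j : ℝ) : ℂ))) := by
  refine continuous_const.add (Continuous.prodMk ?_ ?_)
  · exact Complex.continuous_ofReal.comp (continuous_const.mul continuous_id)
  · exact continuous_pi fun j => Complex.continuous_ofReal.comp (continuous_id.mul continuous_const)

lemma integrand_contOn {v : ℂ × (Fin n → ℂ) → ℂ}
    (hvc : ContinuousOn v (SemiStrip T ρ ×ˢ TStrip n σ)) (hlam : 0 < lam)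
    {p : ℂ × (Fin n → ℂ)} (hp : p ∈ SemiStrip T ρ ×ˢ TStrip n σ) :
    ContinuousOn (fun t : ℝ =>
      v (p + (((lam * t : ℝ) : ℂ), fun j => ((t * ω j : ℝ) : ℂ)))) (Set.Iic (0 : ℝ)) :=
  hvc.comp (shift_continuous p).continuousOn (fun _ ht => shift_mem_strip hlam hp ht)

lemma integrand_integrableOn {v : ℂ × (Fin n → ℂ) → ℂ}
    (hvc : ContinuousOn v (SemiStrip T ρ ×ˢ TStrip n σ)) (hlam : 0 < lam)
    (hbd : ∀ p ∈ SemiStrip T ρ ×ˢ TStrip n σ, ‖v p‖ ≤ K * Real.exp p.1.re)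
    {p : ℂ × (Fin n → ℂ)} (hp : p ∈ SemiStrip T ρ ×ˢ TStrip n σ) :
    IntegrableOn (fun t : ℝ =>
      v (p + (((lam * t : ℝ) : ℂ), fun j => ((t * ω j : ℝ) : ℂ)))) (Set.Iic (0 : ℝ)) := by
  refine Integrable.mono' ((exp_integrableOn_Iic hlam).const_mul (K * Real.exp p.1.re))
    ((integrand_contOn hvc hlam hp).aestronglyMeasurable measurableSet_Iic) ?_
  refine (ae_restrict_mem measurableSet_Iic).mono (fun t ht => ?_)
  have h1 := hbd _ (shift_mem_strip (ω := ω) hlam hp ht)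
  have h2 : (p + (((lam * t : ℝ) : ℂ), fun j => ((t * ω j : ℝ) : ℂ))).1.re
      = p.1.re + lam * t := by simp
  rw [h2] at h1
  calc ‖v _‖ ≤ K * Real.exp (p.1.re + lam * t) := h1
  _ = K * Real.exp p.1.re * Real.exp (lam * t) := by rw [Real.exp_add]; ring

set_option maxHeartbeats 1000000 in
set_option synthInstance.maxHeartbeats 1000000 in
lemma main_hasFDerivAt {v : ℂ × (Fin n → ℂ) → ℂ}
    (hvc : ContinuousOn v (SemiStrip T ρ ×ˢ TStrip n σ))
    (hvd : DifferentiableOn ℂ v (interior (SemiStrip T ρ ×ˢ TStrip n σ)))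
    (hbd : ∀ p ∈ SemiStrip T ρ ×ˢ TStrip n σ, ‖v p‖ ≤ K * Real.exp p.1.re)
    (hlam : 0 < lam) (hK : 0 < K)
    {p₀ : ℂ × (Fin n → ℂ)} (hp₀ : p₀ ∈ interior (SemiStrip T ρ ×ˢ TStrip n σ)) :
    HasFDerivAt (fun p : ℂ × (Fin n → ℂ) => ∫ t in Set.Iic (0 : ℝ),
        v (p + (((lam * t : ℝ) : ℂ), fun j => ((t * ω j : ℝ) : ℂ))))
      (∫ t in Set.Iic (0 : ℝ),
        fderiv ℂ v (p₀ + (((lam * t : ℝ) : ℂ), fun j => ((t * ω j : ℝ) : ℂ)))) p₀ := by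
  obtain ⟨ε', hε', hball'⟩ := Metric.isOpen_iff.mp isOpen_interior p₀ hp₀
  set ε := ε' / 3 with hεdef
  have hεpos : 0 < ε := by positivity
  have hcb : Metric.closedBall p₀ (2 * ε) ⊆ SemiStrip T ρ ×ˢ TStrip n σ := by
    intro x hx
    refine interior_subset (hball' ?_)
    rw [Metric.mem_closedBall] at hx
    rw [Metric.mem_ball]
    rw [hεdef] at hx
    linarith
  have hcbx : ∀ x ∈ Metric.ball p₀ ε, Metric.closedBall x ε
      ⊆ SemiStrip T ρ ×ˢ TStrip n σ := by
    intro x hx y hy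
    refine hcb ?_
    rw [Metric.mem_closedBall] at hy ⊢
    rw [Metric.mem_ball] at hx
    calc dist y p₀ ≤ dist y x + dist x p₀ := dist_triangle _ _ _
    _ ≤ 2 * ε := by linarith
  have hmemS : ∀ x ∈ Metric.ball p₀ ε, x ∈ SemiStrip T ρ ×ˢ TStrip n σ :=
    fun x hx => hcbx x hx (Metric.mem_closedBall_self hεpos.le)
  have hshift_cb : ∀ x ∈ Metric.ball p₀ ε, ∀ t : ℝ, t ≤ 0 →
      Metric.closedBall (x + (((lam * t : ℝ) : ℂ), fun j => ((t * ω j : ℝ) : ℂ))) ε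
        ⊆ SemiStrip T ρ ×ˢ TStrip n σ :=
    fun x hx t ht => shift_closedBall_subset hlam (hcbx x hx) ht
  have hshift_int : ∀ x ∈ Metric.ball p₀ ε, ∀ t : ℝ, t ≤ 0 → ∀ y,
      y ∈ Metric.ball (x + (((lam * t : ℝ) : ℂ), fun j => ((t * ω j : ℝ) : ℂ))) ε →
      y ∈ interior (SemiStrip T ρ ×ˢ TStrip n σ) := by
    intro x hx t ht y hy
    exact mem_interior.2 ⟨_, Metric.ball_subset_closedBall.trans (hshift_cb x hx t ht),
      Metric.isOpen_ball, hy⟩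
  have re_est : ∀ q q' : ℂ × (Fin n → ℂ), ∀ r : ℝ, dist q q' ≤ r → q.1.re ≤ q'.1.re + r := by
    intro q q' r hqq
    have h1 := Complex.abs_re_le_norm (q.1 - q'.1)
    have h2 : ‖(q - q').1‖ ≤ ‖q - q'‖ := norm_fst_le _
    rw [dist_eq_norm] at hqq
    have h3 : (q.1 - q'.1).re = q.1.re - q'.1.re := by simp
    rw [h3] at h1
    have : |q.1.re - q'.1.re| ≤ r := by
      calc |q.1.re - q'.1.re| ≤ ‖q.1 - q'.1‖ := h1
      _ = ‖(q - q').1‖ := rfl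
      _ ≤ r := le_trans h2 hqq
    linarith [abs_le.mp this |>.2]
  have h_diff : ∀ t : ℝ, t ≤ 0 → ∀ x ∈ Metric.ball p₀ ε,
      HasFDerivAt (fun y => v (y + (((lam * t : ℝ) : ℂ), fun j => ((t * ω j : ℝ) : ℂ))))
        (fderiv ℂ v (x + (((lam * t : ℝ) : ℂ), fun j => ((t * ω j : ℝ) : ℂ)))) x := by
    intro t ht x hx
    have hA : DifferentiableAt ℂ v
        (x + (((lam * t : ℝ) : ℂ), fun j => ((t * ω j : ℝ) : ℂ))) :=
      hvd.differentiableAt (isOpen_interior.mem_nhds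
        (hshift_int x hx t ht _ (Metric.mem_ball_self hεpos)))
    have := hA.hasFDerivAt.comp x ((hasFDerivAt_id x).add_const
      ((((lam * t : ℝ) : ℂ), fun j => ((t * ω j : ℝ) : ℂ)) : ℂ × (Fin n → ℂ)))
    simpa [Function.comp_def] using this
  have h_bound : ∀ t : ℝ, t ≤ 0 → ∀ x ∈ Metric.ball p₀ ε,
      ‖fderiv ℂ v (x + (((lam * t : ℝ) : ℂ), fun j => ((t * ω j : ℝ) : ℂ)))‖
        ≤ 3 * (K * Real.exp (p₀.1.re + 2 * ε)) / ε * Real.exp (lam * t) := by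
    intro t ht x hx
    set q := x + ((((lam * t : ℝ) : ℂ)), fun j => ((t * ω j : ℝ) : ℂ)) with hq
    have hM : (0:ℝ) < K * Real.exp (q.1.re + ε) := by positivity
    have hcau := cauchy_fderiv_bound v hεpos hM
      (fun y hy => hvd.differentiableAt (isOpen_interior.mem_nhds
        (hshift_int x hx t ht y hy)))
      (fun y hy => ?_)
    · have hre1 : q.1.re = x.1.re + lam * t := by rw [hq]; simp
      have hre2 : x.1.re ≤ p₀.1.re + ε :=
        re_est x p₀ ε (le_of_lt (Metric.mem_ball.mp hx))
      calc ‖fderiv ℂ v q‖ ≤ 3 * (K * Real.exp (q.1.re + ε)) / ε := hcau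
      _ ≤ 3 * (K * Real.exp (p₀.1.re + 2 * ε + lam * t)) / ε := by
          gcongr 3 * (K * Real.exp ?_) / ε
          rw [hre1]; linarith
      _ = 3 * (K * Real.exp (p₀.1.re + 2 * ε)) / ε * Real.exp (lam * t) := by
          rw [Real.exp_add]; ring
    · have hyS : y ∈ SemiStrip T ρ ×ˢ TStrip n σ :=
        Metric.ball_subset_closedBall.trans (hshift_cb x hx t ht) hy
      have hre : y.1.re ≤ q.1.re + ε :=
        re_est y q ε (le_of_lt (Metric.mem_ball.mp hy))
      calc ‖v y‖ ≤ K * Real.exp y.1.re := hbd y hyS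
      _ ≤ K * Real.exp (q.1.re + ε) := by
          have := Real.exp_le_exp.2 hre
          nlinarith [Real.exp_pos y.1.re, Real.exp_pos (q.1.re + ε)]
  -- now apply the dominated-derivative theorem
  refine hasFDerivAt_integral_of_dominated_of_fderiv_le (𝕜 := ℂ)
    (F' := fun x t => fderiv ℂ v (x + (((lam * t : ℝ) : ℂ), fun j => ((t * ω j : ℝ) : ℂ))))
    (bound := fun t => 3 * (K * Real.exp (p₀.1.re + 2 * ε)) / ε * Real.exp (lam * t))
    (Metric.ball_mem_nhds p₀ hεpos) ?_ ?_ ?_ ?_ ?_ ?_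
  · exact Filter.eventually_of_mem (Metric.ball_mem_nhds p₀ hεpos)
      (fun x hx => (integrand_contOn hvc hlam (hmemS x hx)).aestronglyMeasurable
        measurableSet_Iic)
  · exact integrand_integrableOn hvc hlam hbd (hmemS p₀ (Metric.mem_ball_self hεpos))
  · borelize ((ℂ × (Fin n → ℂ)) →L[ℂ] ℂ)
    refine Measurable.aestronglyMeasurable ?_
    exact (measurable_fderiv ℂ v).comp (shift_continuous p₀).measurable
  · exact (ae_restrict_mem measurableSet_Iic).mono (fun t ht => h_bound t ht)
  · exact ((exp_integrableOn_Iic hlam).const_mul _)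
  · exact (ae_restrict_mem measurableSet_Iic).mono (fun t ht => h_diff t ht)

end Aux

/-- The method-of-characteristics solution of `λ ∂u/∂s + D_ω u = v` on a
semi-infinite strip, for an exponentially decaying right-hand side: the integral
`u(s,φ) = ∫_{−∞}^0 v(s + λt, φ + ωt) dt` converges absolutely, is holomorphic in
the interior, solves the PDE there, and satisfies `|u| ≤ λ⁻¹ K e^{Re s}`. -/
theorem characteristics_solution (n : ℕ) (hn : 1 ≤ n) (lam : ℝ) (hlam : 0 < lam)
    (ω : Fin n → ℝ) (T ρ σ K : ℝ) (hρ : 0 < ρ) (hσ : 0 < σ) (hK : 0 < K)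
    (v : ℂ × (Fin n → ℂ) → ℂ)
    (hvc : ContinuousOn v (SemiStrip T ρ ×ˢ TStrip n σ))
    (hvd : DifferentiableOn ℂ v (interior (SemiStrip T ρ ×ˢ TStrip n σ)))
    (hper : ∀ p ∈ SemiStrip T ρ ×ˢ TStrip n σ, ∀ j,
      v (p.1, Function.update p.2 j (p.2 j + 2 * Real.pi)) = v p)
    (hbd : ∀ p ∈ SemiStrip T ρ ×ˢ TStrip n σ, ‖v p‖ ≤ K * Real.exp p.1.re) :
    (∀ p ∈ SemiStrip T ρ ×ˢ TStrip n σ,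
      IntegrableOn
        (fun t : ℝ => v (p.1 + ((lam * t : ℝ) : ℂ), fun j => p.2 j + ((t * ω j : ℝ) : ℂ)))
        (Set.Iic (0 : ℝ))) ∧
    DifferentiableOn ℂ
      (fun p : ℂ × (Fin n → ℂ) =>
        ∫ t in Set.Iic (0 : ℝ),
          v (p.1 + ((lam * t : ℝ) : ℂ), fun j => p.2 j + ((t * ω j : ℝ) : ℂ)))
      (interior (SemiStrip T ρ ×ˢ TStrip n σ)) ∧
    (∀ p ∈ interior (SemiStrip T ρ ×ˢ TStrip n σ),
      fderiv ℂ
        (fun p : ℂ × (Fin n → ℂ) =>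
          ∫ t in Set.Iic (0 : ℝ),
            v (p.1 + ((lam * t : ℝ) : ℂ), fun j => p.2 j + ((t * ω j : ℝ) : ℂ))) p
        ((lam : ℂ), fun j => (ω j : ℂ)) = v p) ∧
    (∀ p ∈ SemiStrip T ρ ×ˢ TStrip n σ,
      ‖∫ t in Set.Iic (0 : ℝ),
          v (p.1 + ((lam * t : ℝ) : ℂ), fun j => p.2 j + ((t * ω j : ℝ) : ℂ))‖
        ≤ lam⁻¹ * K * Real.exp p.1.re) := by
  
  have hn0 := hn
  constructor
  · -- absolute convergence
    intro p hp
    exact integrand_integrableOn hvc hlam hbd hp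
  refine ⟨?_, ?_, ?_⟩
  · -- holomorphy
    intro p hp
    exact (main_hasFDerivAt hvc hvd hbd hlam hK hp).differentiableAt.differentiableWithinAt
  · -- the PDE
    intro p hp
    set l : ℝ → ℂ × (Fin n → ℂ) :=
      fun τ => (p.1 + ((lam * τ : ℝ) : ℂ), fun j => p.2 j + ((τ * ω j : ℝ) : ℂ)) with hl_def
    have hl0 : l 0 = p := by
      rw [hl_def]
      refine Prod.ext ?_ ?_ <;> simp
    have hcont_l : Continuous l := shift_continuous p
    set u : ℂ × (Fin n → ℂ) → ℂ := fun q => ∫ t in Set.Iic (0 : ℝ),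
      v (q.1 + ((lam * t : ℝ) : ℂ), fun j => q.2 j + ((t * ω j : ℝ) : ℂ)) with hu_def
    have hU : HasFDerivAt u (∫ t in Set.Iic (0 : ℝ),
        fderiv ℂ v (p + (((lam * t : ℝ) : ℂ), fun j => ((t * ω j : ℝ) : ℂ)))) p :=
      main_hasFDerivAt hvc hvd hbd hlam hK hp
    have hU' : HasFDerivAt u (fderiv ℂ u p) p := hU.differentiableAt.hasFDerivAt
    set vec : ℂ × (Fin n → ℂ) := ((lam : ℂ), fun j => (ω j : ℂ)) with hvec
    have hl_deriv : HasDerivAt l vec 0 := by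
      rw [hl_def, hvec]
      refine HasDerivAt.prodMk ?_ ?_
      · have h1 : HasDerivAt (fun τ : ℝ => lam * τ) lam 0 := by
          simpa using (hasDerivAt_id (0 : ℝ)).const_mul lam
        exact h1.ofReal_comp.const_add p.1
      · refine hasDerivAt_pi.2 fun j => ?_
        have h1 : HasDerivAt (fun τ : ℝ => τ * ω j) (ω j) 0 := by
          simpa using (hasDerivAt_id (0 : ℝ)).mul_const (ω j)
        exact h1.ofReal_comp.const_add (p.2 j)
    have hchain : HasDerivAt (fun τ : ℝ => u (l τ)) (fderiv ℂ u p vec) 0 := by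
      have hU'' : HasFDerivAt u ((fderiv ℂ u p).restrictScalars ℝ) (l 0) := by
        rw [hl0]; exact hU'.restrictScalars ℝ
      simpa [Function.comp_def] using hU''.comp_hasDerivAt 0 hl_deriv
    set h : ℝ → ℂ := fun t => v (l t) with hh_def
    have hshift : ∀ τ : ℝ, u (l τ) = ∫ t in Set.Iic τ, h t := by
      intro τ
      have e1 : (fun t : ℝ => v ((l τ).1 + ((lam * t : ℝ) : ℂ),
          fun j => (l τ).2 j + ((t * ω j : ℝ) : ℂ))) = fun t => h (t + τ) := by
        funext t
        rw [hh_def, hl_def]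
        congr 1
        refine Prod.ext ?_ ?_
        · show p.1 + ((lam * τ : ℝ) : ℂ) + ((lam * t : ℝ) : ℂ)
            = p.1 + ((lam * (t + τ) : ℝ) : ℂ)
          push_cast; ring
        · funext j
          show p.2 j + ((τ * ω j : ℝ) : ℂ) + ((t * ω j : ℝ) : ℂ)
            = p.2 j + (((t + τ) * ω j : ℝ) : ℂ)
          push_cast; ring
      calc u (l τ) = ∫ t in Set.Iic (0 : ℝ), h (t + τ) := by
            have hrfl : u (l τ) = ∫ t in Set.Iic (0 : ℝ),
                v ((l τ).1 + ((lam * t : ℝ) : ℂ), fun j => (l τ).2 j + ((t * ω j : ℝ) : ℂ)) := rfl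
            rw [hrfl, e1]
      _ = ∫ t in Set.Iic τ, h t := by
          have him := MeasurePreserving.setIntegral_image_emb
            (measurePreserving_add_right volume τ)
            (MeasurableEquiv.addRight τ).measurableEmbedding h (Set.Iic (0 : ℝ))
          have himg : (fun x : ℝ => x + τ) '' Set.Iic (0 : ℝ) = Set.Iic τ := by
            rw [Set.image_add_const_Iic]; norm_num
          rw [himg] at him
          exact him.symm
    have hev : l ⁻¹' interior (SemiStrip T ρ ×ˢ TStrip n σ) ∈ nhds (0 : ℝ) := by
      refine hcont_l.continuousAt.preimage_mem_nhds ?_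
      rw [hl0]
      exact isOpen_interior.mem_nhds hp
    obtain ⟨ε₀, hε₀pos, hε₀⟩ := Metric.eventually_nhds_iff.mp hev
    have hε₀' : ∀ t : ℝ, |t| < ε₀ → l t ∈ SemiStrip T ρ ×ˢ TStrip n σ := by
      intro t ht
      exact interior_subset (hε₀ (by simpa [Real.dist_eq] using ht))
    set b := ε₀ / 2 with hb_def
    have hbpos : 0 < b := by positivity
    have hIntIic : IntegrableOn h (Set.Iic b) := by
      have h1 : IntegrableOn h (Set.Iic (0 : ℝ)) :=
        integrand_integrableOn hvc hlam hbd (interior_subset hp)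
      have h2 : IntegrableOn h (Set.Ioc (0 : ℝ) b) := by
        refine (ContinuousOn.integrableOn_Icc ?_).mono_set Set.Ioc_subset_Icc_self
        refine hvc.comp hcont_l.continuousOn (fun t ht => hε₀' t ?_)
        rw [abs_lt]
        constructor <;> [linarith [ht.1]; linarith [ht.2, hbpos]]
      have h3 := h1.union h2
      rwa [Set.Iic_union_Ioc_eq_Iic hbpos.le] at h3
    have hG : ∀ τ ∈ Set.Ioo (-1 : ℝ) b, (∫ t in Set.Iic τ, h t)
        = (∫ t in Set.Iic (0 : ℝ), h t) + ∫ t in (0 : ℝ)..τ, h t := by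
      intro τ hτ
      have h1 : IntegrableOn h (Set.Iic τ) := hIntIic.mono_set (Set.Iic_subset_Iic.2 hτ.2.le)
      have h0 : IntegrableOn h (Set.Iic (0 : ℝ)) :=
        hIntIic.mono_set (Set.Iic_subset_Iic.2 hbpos.le)
      have h4 := intervalIntegral.integral_Iic_sub_Iic h0 h1
      exact sub_eq_iff_eq_add'.mp h4
    have hFTC : HasDerivAt (fun τ : ℝ => (∫ t in Set.Iic (0 : ℝ), h t)
        + ∫ t in (0 : ℝ)..τ, h t) (h 0) 0 := by
      refine HasDerivAt.const_add _ ?_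
      refine intervalIntegral.integral_hasDerivAt_right ?_ ?_ ?_
      · rw [intervalIntegrable_iff]
        simp
      · refine ⟨Set.Ioo (-ε₀) ε₀, Ioo_mem_nhds (by linarith) hε₀pos, ?_⟩
        refine ContinuousOn.aestronglyMeasurable ?_ measurableSet_Ioo
        refine hvc.comp hcont_l.continuousOn (fun t ht => hε₀' t ?_)
        rw [abs_lt]; exact ⟨ht.1, ht.2⟩
      · have hvAt : ContinuousAt v (l 0) := by
          rw [hl0]
          exact hvc.continuousAt (mem_interior_iff_mem_nhds.1 hp)
        exact hvAt.comp hcont_l.continuousAt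
    have hGd : HasDerivAt (fun τ : ℝ => ∫ t in Set.Iic τ, h t) (h 0) 0 := by
      refine hFTC.congr_of_eventuallyEq ?_
      filter_upwards [Ioo_mem_nhds (by norm_num : (-1:ℝ) < 0) hbpos] with τ hτ
      exact hG τ hτ
    have hcomp : (fun τ : ℝ => u (l τ)) = fun τ : ℝ => ∫ t in Set.Iic τ, h t :=
      funext hshift
    rw [hcomp] at hchain
    have hfinal : fderiv ℂ u p vec = h 0 := hchain.unique hGd
    have hh0 : h 0 = v p := congrArg v hl0
    rw [hh0] at hfinal
    exact hfinal
  · -- the bound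
    intro p hp
    have hb2 : ∀ᵐ t ∂(volume.restrict (Set.Iic (0:ℝ))),
        ‖v (p.1 + ((lam * t : ℝ) : ℂ), fun j => p.2 j + ((t * ω j : ℝ) : ℂ))‖
          ≤ K * Real.exp p.1.re * Real.exp (lam * t) := by
      refine (ae_restrict_mem measurableSet_Iic).mono (fun t ht => ?_)
      have h1 := hbd _ (shift_mem_strip (ω := ω) hlam hp ht)
      have h2 : (p + (((lam * t : ℝ) : ℂ), fun j => ((t * ω j : ℝ) : ℂ))).1.re
          = p.1.re + lam * t := by simp
      rw [h2] at h1
      calc ‖v _‖ ≤ K * Real.exp (p.1.re + lam * t) := h1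
      _ = K * Real.exp p.1.re * Real.exp (lam * t) := by rw [Real.exp_add]; ring
    have hle := norm_integral_le_of_norm_le
      ((exp_integrableOn_Iic hlam).const_mul (K * Real.exp p.1.re)) hb2
    calc ‖∫ t in Set.Iic (0:ℝ),
        v (p.1 + ((lam * t : ℝ) : ℂ), fun j => p.2 j + ((t * ω j : ℝ) : ℂ))‖
        ≤ ∫ t in Set.Iic (0:ℝ), K * Real.exp p.1.re * Real.exp (lam * t) := hle
    _ = lam⁻¹ * K * Real.exp p.1.re := by
        rw [MeasureTheory.integral_const_mul, exp_integral_Iic hlam]; ring
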